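/- Let G be a group, H a subgroup of G, x ∈ G, and P ∈ InvLO_x^H(G) ∩ Cof_x^H(G) with 1 <_P x. Let ρ : H → ℤ be the function characterized by x^{ρ(h)} ≤_P h <_P x^{ρ(h)+1} for all h ∈ H. Then ρ is a quasi morphism of defect 1: |ρ(hh') − ρ(h) − ρ(h')| ≤ 1 for all h, h' ∈ H. -/

import Mathlib

/-- A subset `P ⊆ G` is the positive cone of a left ordering: `P·P ⊆ P` and
`G = P ⊔ P⁻¹ ⊔ {1}`. -/
def IsPosCone {G : Type*} [Group G] (P : Set G) : Prop :=
  (∀ a ∈ P, ∀ b ∈ P, a * b ∈ P) ∧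
  (∀ g : G, g ∈ P ∨ g⁻¹ ∈ P ∨ g = 1) ∧
  (∀ g : G, g ∈ P → g⁻¹ ∉ P) ∧
  (1 : G) ∉ P

/-- The left-invariant order determined by a positive cone: `a <_P b` iff `a⁻¹ b ∈ P`. -/
def ltC {G : Type*} [Group G] (P : Set G) (a b : G) : Prop := a⁻¹ * b ∈ P

/-- The non-strict order determined by a positive cone. -/
def leC {G : Type*} [Group G] (P : Set G) (a b : G) : Prop := ltC P a b ∨ a = b

/-- `P ∈ InvLO_x^H(G)`: right multiplication by `x` preserves `<_P` on the
subgroup generated by `H ∪ {x}`. -/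
def InvOn {G : Type*} [Group G] (P : Set G) (H : Subgroup G) (x : G) : Prop :=
  ∀ b ∈ Subgroup.closure ((H : Set G) ∪ {x}),
  ∀ b' ∈ Subgroup.closure ((H : Set G) ∪ {x}),
  ltC P b b' → ltC P (b * x) (b' * x)

/-- `P ∈ Cof_x^H(G)`: `x` is cofinal to `H` with respect to `<_P`. -/
def CofTo {G : Type*} [Group G] (P : Set G) (H : Subgroup G) (x : G) : Prop :=
  ∀ h ∈ H, ∃ N : ℕ, 1 ≤ N ∧ ltC P (x ^ (-(N : ℤ))) h ∧ ltC P h (x ^ (N : ℤ))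

/-- the function `ρ : H → ℤ` characterized by `x^(ρ h) ≤_P h <_P x^(ρ h + 1)`
is a quasi morphism of defect 1. -/
theorem rho_quasimorphism_defect_one {G : Type*} [Group G] (P : Set G) (hP : IsPosCone P)
    (H : Subgroup G) (x : G) (hinv : InvOn P H x) (hcof : CofTo P H x)
    (hx : ltC P 1 x) (ρ : G → ℤ)
    (hρ : ∀ h ∈ H, leC P (x ^ ρ h) h ∧ ltC P h (x ^ (ρ h + 1))) :
    ∀ h ∈ H, ∀ h' ∈ H, |ρ (h * h') - ρ h - ρ h'| ≤ 1 := by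
  obtain ⟨hmul, htri, hasym, hone⟩ := hP
  set S := Subgroup.closure ((H : Set G) ∪ {x}) with hS
  have hxS : x ∈ S := Subgroup.subset_closure (Or.inr rfl)
  have hHS : ∀ g ∈ H, g ∈ S := fun g hg => Subgroup.subset_closure (Or.inl hg)
  have hxP : x ∈ P := by simpa [ltC] using hx
  have trans : ∀ a b c : G, ltC P a b → ltC P b c → ltC P a c := by
    intro a b c hab hbc
    have := hmul _ hab _ hbc
    have heq : (a⁻¹ * b) * (b⁻¹ * c) = a⁻¹ * c := by group
    rwa [heq] at this
  have irrefl : ∀ a : G, ¬ ltC P a a := by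
    intro a ha
    simp only [ltC, inv_mul_cancel] at ha
    exact hone ha
  have asym : ∀ a b : G, ltC P a b → ltC P b a → False := by
    intro a b hab hba
    have := hasym _ hab
    have heq : (a⁻¹ * b)⁻¹ = b⁻¹ * a := by group
    rw [heq] at this
    exact this hba
  have tricho : ∀ a b : G, ltC P a b ∨ ltC P b a ∨ a = b := by
    intro a b
    rcases htri (a⁻¹ * b) with h | h | h
    · exact Or.inl h
    · refine Or.inr (Or.inl ?_)
      have heq : (a⁻¹ * b)⁻¹ = b⁻¹ * a := by group
      rwa [heq] at h
    · refine Or.inr (Or.inr ?_)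
      have := congrArg (a * ·) h
      simpa [mul_assoc] using this.symm
  have lmul : ∀ (c a b : G), ltC P a b → ltC P (c * a) (c * b) := by
    intro c a b hab
    have heq : (c * a)⁻¹ * (c * b) = a⁻¹ * b := by group
    rw [ltC, heq]; exact hab
  have rinv : ∀ b ∈ S, ∀ b' ∈ S, ltC P b b' → ltC P (b * x⁻¹) (b' * x⁻¹) := by
    intro b hb b' hb' hlt
    have hb1 : b * x⁻¹ ∈ S := mul_mem hb (inv_mem hxS)
    have hb'1 : b' * x⁻¹ ∈ S := mul_mem hb' (inv_mem hxS)
    rcases tricho (b * x⁻¹) (b' * x⁻¹) with h1 | h1 | h1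
    · exact h1
    · exfalso
      have := hinv _ hb'1 _ hb1 h1
      simp only [inv_mul_cancel_right] at this
      exact asym _ _ hlt this
    · exfalso
      have : b = b' := by
        have := congrArg (· * x) h1
        simpa [mul_assoc] using this
      subst this
      exact irrefl _ hlt
  have rzpow : ∀ n : ℤ, ∀ b ∈ S, ∀ b' ∈ S, ltC P (b * x ^ n) (b' * x ^ n) = ltC P b b' → True := fun _ _ _ _ _ _ => trivial
  have rpow : ∀ n : ℤ, ∀ b ∈ S, ∀ b' ∈ S, ltC P b b' → ltC P (b * x ^ n) (b' * x ^ n) := by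
    intro n
    induction n using Int.induction_on with
    | zero => intro b _ b' _ h; simpa using h
    | succ k ih =>
      intro b hb b' hb' h
      have h1 := ih b hb b' hb' h
      have := hinv _ (mul_mem hb (zpow_mem hxS _)) _ (mul_mem hb' (zpow_mem hxS _)) h1
      have heq : ∀ g : G, g * x ^ (k : ℤ) * x = g * x ^ ((k : ℤ) + 1) := by
        intro g; rw [zpow_add, zpow_one, mul_assoc]
      rwa [heq, heq] at this
    | pred k ih =>
      intro b hb b' hb' h
      have h1 := ih b hb b' hb' h
      have := rinv _ (mul_mem hb (zpow_mem hxS _)) _ (mul_mem hb' (zpow_mem hxS _)) h1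
      have heq : ∀ g : G, g * x ^ (-(k : ℤ)) * x⁻¹ = g * x ^ (-(k : ℤ) - 1) := by
        intro g; rw [sub_eq_add_neg, zpow_add, zpow_neg_one, mul_assoc]
      rwa [heq, heq] at this
  have ppos : ∀ k : ℤ, 1 ≤ k → x ^ k ∈ P := by
    intro k hk
    obtain ⟨m, rfl⟩ : ∃ m : ℕ, k = (m : ℤ) + 1 := ⟨(k - 1).toNat, by omega⟩
    induction m with
    | zero => simpa using hxP
    | succ n ih =>
      have h1 := ih (by omega)
      have h2 : x ^ ((n : ℤ) + 1) * x ∈ P := hmul _ h1 _ hxP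
      rw [show ((n + 1 : ℕ) : ℤ) + 1 = ((n : ℤ) + 1) + 1 by push_cast; ring,
        zpow_add _ _ 1, zpow_one]
      exact h2
  have pow_lt : ∀ a b : ℤ, a < b → ltC P (x ^ a) (x ^ b) := by
    intro a b hab
    have : (x ^ a)⁻¹ * x ^ b = x ^ (b - a) := by
      rw [← zpow_neg, ← zpow_add]; ring_nf
    rw [ltC, this]
    exact ppos _ (by omega)
  have lt_pow : ∀ a b : ℤ, ltC P (x ^ a) (x ^ b) → a < b := by
    intro a b hab
    by_contra hc
    push_neg at hc
    rcases eq_or_lt_of_le hc with h | h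
    · subst h; exact irrefl _ hab
    · exact asym _ _ hab (pow_lt _ _ h)
  have le_lt_trans : ∀ a b c : G, leC P a b → ltC P b c → ltC P a c := by
    rintro a b c (h | rfl) h2
    · exact trans _ _ _ h h2
    · exact h2
  -- main argument
  intro h hh h' hh'
  obtain ⟨le1, lt1⟩ := hρ h hh
  obtain ⟨le2, lt2⟩ := hρ h' hh'
  obtain ⟨le3, lt3⟩ := hρ (h * h') (mul_mem hh hh')
  -- upper bound : h * h' < x ^ (ρ h + ρ h' + 2)
  have up : ltC P (h * h') (x ^ (ρ h + ρ h' + 2)) := by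
    have s1 : ltC P (h * h') (h * x ^ (ρ h' + 1)) := lmul _ _ _ lt2
    have s2 : ltC P (h * x ^ (ρ h' + 1)) (x ^ (ρ h + 1) * x ^ (ρ h' + 1)) :=
      rpow (ρ h' + 1) _ (hHS h hh) _ (Subgroup.zpow_mem S hxS _) lt1
    have heq : x ^ (ρ h + 1) * x ^ (ρ h' + 1) = x ^ (ρ h + ρ h' + 2) := by
      rw [← zpow_add]; ring_nf
    rw [heq] at s2
    exact trans _ _ _ s1 s2
  -- lower bound : x ^ (ρ h + ρ h') ≤ h * h'
  have low : leC P (x ^ (ρ h + ρ h')) (h * h') := by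
    have s1 : leC P (x ^ (ρ h) * x ^ (ρ h')) (h * x ^ (ρ h')) := by
      rcases le1 with h1 | h1
      · exact Or.inl (rpow (ρ h') _ (Subgroup.zpow_mem S hxS _) _ (hHS h hh) h1)
      · exact Or.inr (by rw [h1])
    have s2 : leC P (h * x ^ (ρ h')) (h * h') := by
      rcases le2 with h1 | h1
      · exact Or.inl (lmul _ _ _ h1)
      · exact Or.inr (by rw [h1])
    have heq : x ^ (ρ h) * x ^ (ρ h') = x ^ (ρ h + ρ h') := by rw [← zpow_add]
    rw [heq] at s1
    rcases s1 with h1 | h1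
    · rcases s2 with h2 | h2
      · exact Or.inl (trans _ _ _ h1 h2)
      · exact Or.inl (h2 ▸ h1)
    · rw [h1]; exact s2
  have b1 : ρ (h * h') < ρ h + ρ h' + 2 :=
    lt_pow _ _ (le_lt_trans _ _ _ le3 up)
  have b2 : ρ h + ρ h' < ρ (h * h') + 1 :=
    lt_pow _ _ (le_lt_trans _ _ _ low lt3)
  rw [abs_le]
  omega
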